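/- Let l ≥ 6 be an integer with l ≡ 2 (mod 4). Then the alternating 2-edge-colored cycle of length l admits no homomorphism to any 2-edge-colored graph on at most 4 vertices; hence its 2-edge-colored chromatic number is at least 5. -/

import Mathlib

/-- A 2-edge-colored graph: each edge is blue or red (not both), no loops. -/
structure TwoECGraph (V : Type*) where
  blue : V → V → Prop
  red : V → V → Prop
  blue_symm : ∀ u v, blue u v → blue v u
  red_symm : ∀ u v, red u v → red v u
  blue_irrefl : ∀ v, ¬ blue v v
  red_irrefl : ∀ v, ¬ red v v
  not_both : ∀ u v, blue u v → ¬ red u v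

/-- The underlying simple graph of a 2-edge-colored graph. -/
def TwoECGraph.underlying {V : Type*} (G : TwoECGraph V) : SimpleGraph V where
  Adj u v := G.blue u v ∨ G.red u v
  symm := ⟨fun u v h => h.elim (fun h => Or.inl (G.blue_symm u v h)) (fun h => Or.inr (G.red_symm u v h))⟩
  loopless := ⟨fun v h => h.elim (G.blue_irrefl v) (G.red_irrefl v)⟩

/-- Homomorphisms of 2-edge-colored graphs. -/
def TwoECGraph.IsHom {V W : Type*} (G : TwoECGraph V) (H : TwoECGraph W)
    (φ : V → W) : Prop :=
  (∀ u v, G.blue u v → H.blue (φ u) (φ v)) ∧ (∀ u v, G.red u v → H.red (φ u) (φ v))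

def Dstep {W : Type} (H : TwoECGraph W) (u v : W) : Prop :=
  ∃ x, H.blue u x ∧ H.red x v

lemma outside_eq {W : Type} [Fintype W] (hcard : Fintype.card W ≤ 4)
    {u v w x y : W} (huv : u ≠ v) (huw : u ≠ w) (hvw : v ≠ w)
    (hxu : x ≠ u) (hxv : x ≠ v) (hxw : x ≠ w)
    (hyu : y ≠ u) (hyv : y ≠ v) (hyw : y ≠ w) : x = y := by
  classical
  by_contra hxy
  have h5 : ({u, v, w, x, y} : Finset W).card = 5 := by
    rw [Finset.card_insert_of_notMem (by
      simp only [Finset.mem_insert, Finset.mem_singleton]; push_neg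
      exact ⟨huv, huw, fun h => hxu h.symm, fun h => hyu h.symm⟩)]
    rw [Finset.card_insert_of_notMem (by
      simp only [Finset.mem_insert, Finset.mem_singleton]; push_neg
      exact ⟨hvw, fun h => hxv h.symm, fun h => hyv h.symm⟩)]
    rw [Finset.card_insert_of_notMem (by
      simp only [Finset.mem_insert, Finset.mem_singleton]; push_neg
      exact ⟨fun h => hxw h.symm, fun h => hyw h.symm⟩)]
    rw [Finset.card_insert_of_notMem (by
      simp only [Finset.mem_singleton]; exact hxy)]
    rw [Finset.card_singleton]
  have hle := Finset.card_le_univ ({u, v, w, x, y} : Finset W)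
  omega

lemma no_loop {W : Type} (H : TwoECGraph W) (u : W) : ¬ Dstep H u u := by
  rintro ⟨x, hb, hr⟩
  exact H.not_both u x hb (H.red_symm x u hr)

lemma no_tri {W : Type} [Fintype W] (H : TwoECGraph W) (hcard : Fintype.card W ≤ 4)
    {u v w : W} (huv : u ≠ v) (hvw : v ≠ w) (hwu : w ≠ u)
    (h1 : Dstep H u v) (h2 : Dstep H v w) (h3 : Dstep H w u) : False := by
  obtain ⟨a, hba, hra⟩ := h1
  obtain ⟨b, hbb, hrb⟩ := h2
  obtain ⟨c, hbc, hrc⟩ := h3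
  have hau : a ≠ u := fun h => H.blue_irrefl u (h ▸ hba)
  have hav : a ≠ v := fun h => H.red_irrefl v (h ▸ hra)
  have hbv : b ≠ v := fun h => H.blue_irrefl v (h ▸ hbb)
  have hbw : b ≠ w := fun h => H.red_irrefl w (h ▸ hrb)
  have hcw : c ≠ w := fun h => H.blue_irrefl w (h ▸ hbc)
  have hcu : c ≠ u := fun h => H.red_irrefl u (h ▸ hrc)
  by_cases haw : a = w
  · by_cases hbu : b = u
    · -- blue u w and red u w
      exact H.not_both u w (haw ▸ hba) (hbu ▸ hrb)
    · by_cases hcv : c = v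
      · -- red w v and blue w v
        exact H.not_both w v (hcv ▸ hbc) (haw ▸ hra)
      · have hbc' : b = c := outside_eq hcard huv (Ne.symm hwu) hvw
          (fun h => hbu h) hbv hbw hcu (fun h => hcv h) hcw
        -- red b w (b=c): red c w; blue w c gives blue c w
        exact H.not_both c w (H.blue_symm w c hbc) (hbc' ▸ hrb)
  · have ha3 : a ≠ w := haw
    by_cases hbu : b = u
    · by_cases hcv : c = v
      · -- blue v u and red v u
        exact H.not_both v u (hbu ▸ hbb) (hcv ▸ hrc)
      · have hac : a = c := outside_eq hcard huv (Ne.symm hwu) hvw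
          hau hav ha3 hcu (fun h => hcv h) hcw
        -- blue u a, red a u (from red c u)
        exact H.not_both u a hba (by rw [hac]; exact H.red_symm c u hrc)
    · have hab : a = b := outside_eq hcard huv (Ne.symm hwu) hvw
        hau hav ha3 (fun h => hbu h) hbv hbw
      -- red a v and blue v a (from blue v b)
      exact H.not_both a v (H.blue_symm v a (hab ▸ hbb)) hra

lemma no_odd_closed {W : Type} [Fintype W] (H : TwoECGraph W)
    (hcard : Fintype.card W ≤ 4) :
    ∀ m, m % 2 = 1 → ∀ ψ : ℕ → W, (∀ k < m, Dstep H (ψ k) (ψ (k + 1))) →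
      ψ m = ψ 0 → False := by
  intro m
  induction m using Nat.strong_induction_on with
  | _ m ih =>
    intro hodd ψ hedge hclose
    by_cases hm : m < 5
    · interval_cases m
      · omega
      · exact no_loop H (ψ 0) (hclose ▸ hedge 0 (by norm_num))
      · omega
      · -- m = 3
        have e0 := hedge 0 (by norm_num)
        have e1 := hedge 1 (by norm_num)
        have e2 := hedge 2 (by norm_num)
        rw [hclose] at e2
        by_cases h01 : ψ 0 = ψ 1
        · exact no_loop H (ψ 0) (by rw [h01] at e0 ⊢; exact e0)
        by_cases h12 : ψ 1 = ψ 2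
        · exact no_loop H (ψ 1) (by rw [h12] at e1 ⊢; exact e1)
        by_cases h02 : ψ 0 = ψ 2
        · exact no_loop H (ψ 0) (by rw [h02]; rw [h02] at e2; exact e2)
        · exact no_tri H hcard h01 h12 (fun h => h02 h.symm) e0 e1 e2
      · omega
    · -- m ≥ 5 : pigeonhole on ψ 0 .. ψ 4
      have h5lt : Fintype.card W < Fintype.card (Fin 5) := by
        simp only [Fintype.card_fin]; omega
      obtain ⟨a, b, hab, hfab⟩ :=
        Fintype.exists_ne_map_eq_of_card_lt (fun k : Fin 5 => ψ k.val) h5lt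
      obtain ⟨i, j, hij, hj4, hψij⟩ : ∃ i j : ℕ, i < j ∧ j ≤ 4 ∧ ψ i = ψ j := by
        rcases lt_or_gt_of_ne hab with h | h
        · exact ⟨a.val, b.val, h, by omega, hfab⟩
        · exact ⟨b.val, a.val, h, by omega, hfab.symm⟩
      by_cases hpar : (j - i) % 2 = 1
      · refine ih (j - i) (by omega) hpar (fun k => ψ (i + k)) (fun k hk => ?_) ?_
        · have h := hedge (i + k) (by omega)
          rwa [show i + k + 1 = i + (k + 1) by omega] at h
        · show ψ (i + (j - i)) = ψ (i + 0)
          rw [show i + (j - i) = j by omega, show i + 0 = i by omega]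
          exact hψij.symm
      · refine ih (m - (j - i)) (by omega) (by omega)
          (fun k => if k ≤ i then ψ k else ψ (k + (j - i))) (fun k hk => ?_) ?_
        · beta_reduce
          by_cases hki : k < i
          · rw [if_pos (by omega : k ≤ i), if_pos (by omega : k + 1 ≤ i)]
            exact hedge k (by omega)
          by_cases hke : k = i
          · subst hke
            rw [if_pos le_rfl, if_neg (by omega : ¬ k + 1 ≤ k), hψij,
              show k + 1 + (j - k) = j + 1 by omega]
            exact hedge j (by omega)
          · rw [if_neg (by omega), if_neg (by omega),
              show k + 1 + (j - i) = k + (j - i) + 1 by omega]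
            exact hedge (k + (j - i)) (by omega)
        · beta_reduce
          rw [if_neg (by omega : ¬ m - (j - i) ≤ i), if_pos (Nat.zero_le i),
            show m - (j - i) + (j - i) = m by omega]
          exact hclose

/-- For `l ≥ 6` with `l ≡ 2 (mod 4)`, the alternating 2-edge-colored
cycle of length `l` (whose edges `v i — v ((i+1) % l)` are blue for even `i` and red
for odd `i`) admits no homomorphism to any 2-edge-colored graph on at most 4 vertices;
hence its 2-edge-colored chromatic number is at least 5. -/
theorem alternating_cycle_no_hom_to_four_vertices (l : ℕ) (hl : 6 ≤ l)
    (hmod : l % 4 = 2) :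
    ∀ (W : Type) (_ : Fintype W), Fintype.card W ≤ 4 →
      ∀ H : TwoECGraph W, ¬ ∃ φ : ℕ → W, ∀ i < l,
        (Even i → H.blue (φ i) (φ ((i + 1) % l))) ∧
        (Odd i → H.red (φ i) (φ ((i + 1) % l))) := by
  intro W instW hcard H hex
  obtain ⟨φ, hφ⟩ := hex
  have hdvd : (2 : ℕ) ∣ l := ⟨l / 2, by omega⟩
  have key : ∀ k, Dstep H (φ (2 * k % l)) (φ (2 * (k + 1) % l)) := by
    intro k
    have hil : 2 * k % l < l := Nat.mod_lt _ (by omega)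
    have hi2 : 2 * k % l % 2 = 0 := by
      rw [Nat.mod_mod_of_dvd _ hdvd, Nat.mul_mod_right]
    set i := 2 * k % l with hi
    have hblue := (hφ i hil).1 (Nat.even_iff.mpr hi2)
    have hi1l : i + 1 < l := by omega
    rw [Nat.mod_eq_of_lt hi1l] at hblue
    have hred := (hφ (i + 1) hi1l).2 (Nat.odd_iff.mpr (by omega))
    have heq : (i + 1 + 1) % l = 2 * (k + 1) % l := by
      rw [hi, show 2 * (k + 1) = 2 * k + 2 by ring,
        Nat.add_mod (2 * k) 2 l, Nat.mod_eq_of_lt (show (2 : ℕ) < l by omega)]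
    rw [heq] at hred
    exact ⟨φ (i + 1), hblue, hred⟩
  refine no_odd_closed H hcard (l / 2) (by omega) (fun k => φ (2 * k % l))
    (fun k _ => key k) ?_
  show φ (2 * (l / 2) % l) = φ (2 * 0 % l)
  rw [show 2 * (l / 2) = l by omega, Nat.mod_self]
  norm_num
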